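/- Fix α > 1 and c > 0, and fix o > 0. The function u(b) = (b - c)/(1 + b^α o) for b ≥ 0 has derivative proportional to g(b) = 1 + b^α o + α b^{α-1} o (c - b); g is strictly increasing on [0, c) and strictly decreasing on (c, ∞), and u has a unique critical point which is the global maximum of u on [0, ∞). -/

import Mathlib

theorem pab_utility_unique_max
    (α c o : ℝ) (hα : 1 < α) (hc : 0 < c) (ho : 0 < o)
    (u g : ℝ → ℝ)
    (hu : ∀ b : ℝ, u b = (b - c) / (1 + b ^ α * o))
    (hg : ∀ b : ℝ, g b = 1 + b ^ α * o + α * b ^ (α - 1) * o * (c - b)) :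
    (∀ b : ℝ, 0 < b → deriv u b = g b / (1 + b ^ α * o) ^ 2) ∧
    StrictMonoOn g (Set.Ico 0 c) ∧
    StrictAntiOn g (Set.Ioi c) ∧
    ∃ b₀ : ℝ, 0 < b₀ ∧ g b₀ = 0 ∧
      (∀ b : ℝ, 0 < b → g b = 0 → b = b₀) ∧
      (∀ b : ℝ, 0 ≤ b → u b ≤ u b₀) := by
  have hα0 : (0:ℝ) < α := by linarith
  have hα1 : (0:ℝ) < α - 1 := by linarith
  -- denominator positive for b ≥ 0
  have hden : ∀ b : ℝ, 0 ≤ b → 0 < 1 + b ^ α * o := by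
    intro b hb
    have := Real.rpow_nonneg hb α
    nlinarith
  -- continuity of g
  have hgc : Continuous g := by
    have h1 : Continuous fun b : ℝ => b ^ α := Real.continuous_rpow_const hα0.le
    have h2 : Continuous fun b : ℝ => b ^ (α - 1) := Real.continuous_rpow_const hα1.le
    have : Continuous fun b : ℝ => 1 + b ^ α * o + α * b ^ (α - 1) * o * (c - b) := by
      continuity
    convert this using 1
    funext b; exact hg b
  -- continuity of u on [0, ∞)
  have huc : ContinuousOn u (Set.Ici 0) := by
    have h1 : Continuous fun b : ℝ => b ^ α := Real.continuous_rpow_const hα0.le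
    have : ContinuousOn (fun b : ℝ => (b - c) / (1 + b ^ α * o)) (Set.Ici 0) := by
      apply ContinuousOn.div
      · fun_prop
      · fun_prop
      · intro x hx; exact (hden x hx).ne'
    convert this using 1
    funext b; exact hu b
  -- derivative of u
  have hud : ∀ b : ℝ, 0 < b → HasDerivAt u (g b / (1 + b ^ α * o) ^ 2) b := by
    intro b hb
    have hpow : HasDerivAt (fun x : ℝ => x ^ α) (α * b ^ (α - 1)) b :=
      Real.hasDerivAt_rpow_const (Or.inl hb.ne')
    have hdenb : HasDerivAt (fun x : ℝ => 1 + x ^ α * o) (α * b ^ (α - 1) * o) b :=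
      (hpow.mul_const o).const_add 1
    have hnum : HasDerivAt (fun x : ℝ => x - c) 1 b := (hasDerivAt_id b).sub_const c
    have h := hnum.div hdenb (hden b hb.le).ne'
    have : u = fun x => (x - c) / (1 + x ^ α * o) := funext hu
    rw [this]
    convert h using 1
    · rfl
    · rfl
    · rfl
    rw [hg]; ring
  have hud' : ∀ b : ℝ, 0 < b → deriv u b = g b / (1 + b ^ α * o) ^ 2 :=
    fun b hb => (hud b hb).deriv
  -- derivative of g
  have hgd : ∀ b : ℝ, 0 < b → HasDerivAt g (α * (α - 1) * o * b ^ (α - 2) * (c - b)) b := by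
    intro b hb
    have hpow : HasDerivAt (fun x : ℝ => x ^ α) (α * b ^ (α - 1)) b :=
      Real.hasDerivAt_rpow_const (Or.inl hb.ne')
    have hpow1 : HasDerivAt (fun x : ℝ => x ^ (α - 1)) ((α - 1) * b ^ (α - 1 - 1)) b :=
      Real.hasDerivAt_rpow_const (Or.inl hb.ne')
    have hcb : HasDerivAt (fun x : ℝ => c - x) (-1) b := by
      simpa using (hasDerivAt_id b).const_sub c
    have h2 : HasDerivAt (fun x : ℝ => α * x ^ (α - 1) * o * (c - x))
        ((α * ((α - 1) * b ^ (α - 1 - 1)) * o) * (c - b) + (α * b ^ (α - 1) * o) * (-1)) b := by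
      exact ((hpow1.const_mul α).mul_const o).mul hcb
    have h1 : HasDerivAt (fun x : ℝ => 1 + x ^ α * o) (α * b ^ (α - 1) * o) b :=
      (hpow.mul_const o).const_add 1
    have h := h1.add h2
    have hgfun : g = fun x => 1 + x ^ α * o + α * x ^ (α - 1) * o * (c - x) := funext hg
    rw [hgfun]
    convert h using 1
    · rfl
    · rfl
    · rfl
    have e1 : α - 1 - 1 = α - 2 := by ring
    rw [e1]; ring
  have hgpos0 : ∀ b : ℝ, 0 < b → b ∈ Set.Ioo (0:ℝ) c → 0 < deriv g b := by
    intro b hb hbm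
    rw [(hgd b hb).deriv]
    have := Real.rpow_pos_of_pos hb (α - 2)
    have : 0 < α * (α - 1) * o * b ^ (α - 2) := by positivity
    nlinarith [hbm.2]
  -- strict mono on Ico 0 c
  have hmono : StrictMonoOn g (Set.Ico 0 c) := by
    apply strictMonoOn_of_deriv_pos (convex_Ico 0 c) hgc.continuousOn
    intro x hx
    rw [interior_Ico] at hx
    exact hgpos0 x hx.1 hx
  -- strict anti on Ioi c
  have hanti : StrictAntiOn g (Set.Ioi c) := by
    apply strictAntiOn_of_deriv_neg (convex_Ioi c) hgc.continuousOn
    intro x hx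
    rw [interior_Ioi] at hx
    have hx0 : 0 < x := lt_trans hc hx
    rw [(hgd x hx0).deriv]
    have h1 : 0 < α * (α - 1) * o * x ^ (α - 2) := by
      have := Real.rpow_pos_of_pos hx0 (α - 2); positivity
    have : c - x < 0 := by simp only [Set.mem_Ioi] at hx; linarith
    nlinarith
  -- g c > 0
  have hgcpos : 0 < g c := by
    rw [hg]
    have := Real.rpow_nonneg hc.le α
    nlinarith
  -- find B > c with g B < 0
  obtain ⟨B, hBc, hB1, hBneg⟩ : ∃ B : ℝ, c < B ∧ 1 ≤ B ∧ g B < 0 := by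
    set B := max 1 ((α * c + 1 / o + 1) / (α - 1)) with hBdef
    have hB1 : (1:ℝ) ≤ B := le_max_left _ _
    have hB2 : (α * c + 1 / o + 1) / (α - 1) ≤ B := le_max_right _ _
    have hBα : (α - 1) * B ≥ α * c + 1 / o + 1 := by
      rw [ge_iff_le, ← div_le_iff₀' hα1] at *
      linarith [hB2]
    have hBc : c < B := by
      nlinarith [one_div_pos.mpr ho]
    refine ⟨B, hBc, hB1, ?_⟩
    rw [hg]
    have hB0 : 0 < B := lt_of_lt_of_le one_pos hB1
    have hpow1 : (1:ℝ) ≤ B ^ (α - 1) := Real.one_le_rpow hB1 hα1.le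
    have hsplit : B ^ α = B ^ (α - 1) * B := by
      rw [← Real.rpow_add_one hB0.ne' (α - 1)]; ring_nf
    rw [hsplit]
    -- 1 + o * B^(α-1) * (B + α*(c - B)) = 1 + o * B^(α-1) * (α c - (α-1) B)
    have hkey : B + α * (c - B) ≤ -(1 / o) - 1 := by nlinarith
    have hBn : 0 < B ^ (α - 1) := Real.rpow_pos_of_pos hB0 (α - 1)
    have h1 : B ^ (α - 1) * B * o + α * B ^ (α - 1) * o * (c - B)
        = o * B ^ (α - 1) * (B + α * (c - B)) := by ring
    have h2 : o * B ^ (α - 1) * (B + α * (c - B)) ≤ o * B ^ (α - 1) * (-(1 / o) - 1) := by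
      apply mul_le_mul_of_nonneg_left hkey (by positivity)
    have h3 : o * B ^ (α - 1) * (-(1 / o) - 1) ≤ o * 1 * (-(1 / o) - 1) := by
      have hneg : -(1 / o) - 1 < 0 := by
        have := one_div_pos.mpr ho; linarith
      have hnn : 0 ≤ o * (B ^ (α - 1) - 1) := mul_nonneg ho.le (by linarith)
      nlinarith [mul_nonpos_of_nonneg_of_nonpos hnn hneg.le]
    have h4 : o * 1 * (-(1 / o) - 1) = -1 - o := by
      field_simp
    nlinarith
  -- IVT
  obtain ⟨b₀, hb₀m, hb₀⟩ : ∃ b₀ ∈ Set.Ioo c B, g b₀ = 0 := by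
    have h := intermediate_value_Ioo' hBc.le hgc.continuousOn
    have h0 : (0:ℝ) ∈ Set.Ioo (g B) (g c) := ⟨hBneg, hgcpos⟩
    obtain ⟨x, hx, hx0⟩ := h h0
    exact ⟨x, hx, hx0⟩
  have hcb₀ : c < b₀ := hb₀m.1
  have hb₀pos : 0 < b₀ := lt_trans hc hcb₀
  refine ⟨hud', hmono, hanti, b₀, hb₀pos, hb₀, ?_, ?_⟩
  · -- uniqueness
    intro b hb hgb
    have hbc : c < b := by
      by_contra h
      push_neg at h
      rcases lt_or_eq_of_le h with h | h
      · have := hmono (Set.mem_Ico.mpr ⟨le_refl 0, hc⟩) (Set.mem_Ico.mpr ⟨hb.le, h⟩) hb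
        have hg0 : g 0 = 1 := by
          rw [hg, Real.zero_rpow hα0.ne', Real.zero_rpow hα1.ne']; ring
        rw [hg0, hgb] at this
        linarith
      · rw [h] at hgb; linarith
    exact hanti.injOn (Set.mem_Ioi.mpr hbc) (Set.mem_Ioi.mpr hcb₀) (hgb.trans hb₀.symm)
  · -- global max
    have hub₀pos : 0 < u b₀ := by
      rw [hu]
      exact div_pos (by linarith) (hden b₀ hb₀pos.le)
    -- u mono on [c, b₀]
    have humono : StrictMonoOn u (Set.Icc c b₀) := by
      apply strictMonoOn_of_deriv_pos (convex_Icc c b₀)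
        (huc.mono (fun x hx => le_trans hc.le hx.1))
      intro x hx
      rw [interior_Icc] at hx
      have hx0 : 0 < x := lt_trans hc hx.1
      rw [hud' x hx0]
      have hgx : 0 < g x := by
        have := hanti (Set.mem_Ioi.mpr hx.1) (Set.mem_Ioi.mpr hcb₀) hx.2
        rw [hb₀] at this; exact this
      exact div_pos hgx (pow_pos (hden x hx0.le) 2)
    -- u anti on [b₀, ∞)
    have huanti : StrictAntiOn u (Set.Ici b₀) := by
      apply strictAntiOn_of_deriv_neg (convex_Ici b₀)
        (huc.mono (fun x hx => le_trans hb₀pos.le hx))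
      intro x hx
      rw [interior_Ici] at hx
      have hx0 : 0 < x := lt_trans hb₀pos hx
      rw [hud' x hx0]
      have hgx : g x < 0 := by
        have := hanti (Set.mem_Ioi.mpr hcb₀) (Set.mem_Ioi.mpr (lt_trans hcb₀ hx)) hx
        rw [hb₀] at this; exact this
      exact div_neg_of_neg_of_pos hgx (pow_pos (hden x hx0.le) 2)
    intro b hb
    rcases le_or_gt b c with h | h
    · have : u b ≤ 0 := by
        rw [hu]
        exact div_nonpos_of_nonpos_of_nonneg (by linarith) (hden b hb).le
      linarith
    · rcases le_or_gt b b₀ with h2 | h2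
      · exact humono.monotoneOn (Set.mem_Icc.mpr ⟨h.le, h2⟩)
          (Set.mem_Icc.mpr ⟨hcb₀.le, le_refl _⟩) h2
      · exact (huanti.antitoneOn (Set.mem_Ici.mpr (le_refl _))
          (Set.mem_Ici.mpr h2.le) h2.le)
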